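/- Let m₁, m₂, a₁, a₂ be real numbers, s₁, s₂ > 0, n₁, n₂ > 0, and b₁, b₂ > 0. Then the iterated integral of the indicator 1[a₁ + b₁·y₁ > a₂ + b₂·y₂], with y₁ integrated against gaussianReal m₁ (s₁²/n₁) and y₂ integrated against gaussianReal m₂ (s₂²/n₂), equals Φ((a₁ − a₂ + b₁·m₁ − b₂·m₂) / √(b₁²·s₁²/n₁ + b₂²·s₂²/n₂)). -/

import Mathlib

open MeasureTheory Real ProbabilityTheory
open scoped ENNReal NNReal

/-- Standard normal density. -/
noncomputable def stdNormalPdf (x : ℝ) : ℝ := Real.exp (-x ^ 2 / 2) / Real.sqrt (2 * Real.pi)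

/-- Standard normal CDF. -/
noncomputable def stdNormalCdf (x : ℝ) : ℝ := ∫ t in Set.Iic x, stdNormalPdf t

lemma stdNormalPdf_nonneg (x : ℝ) : 0 ≤ stdNormalPdf x := by
  unfold stdNormalPdf; positivity

lemma continuous_stdNormalPdf : Continuous stdNormalPdf := by
  unfold stdNormalPdf; fun_prop

lemma stdNormalPdf_eq : stdNormalPdf = fun x => (Real.sqrt (2 * π))⁻¹ * Real.exp (-(2⁻¹ : ℝ) * x ^ 2) := by
  ext x
  unfold stdNormalPdf
  rw [div_eq_inv_mul]
  congr 1
  ring_nf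

lemma integrable_stdNormalPdf : Integrable stdNormalPdf := by
  rw [stdNormalPdf_eq]
  exact (integrable_exp_neg_mul_sq (by norm_num)).const_mul _

lemma integral_stdNormalPdf : ∫ x, stdNormalPdf x = 1 := by
  rw [stdNormalPdf_eq]
  rw [integral_const_mul, integral_gaussian]
  rw [← Real.sqrt_inv]
  rw [← Real.sqrt_mul (by positivity)]
  norm_num
  rw [show π⁻¹ * (1/2) * (π / (1/2)) = 1 by field_simp [Real.pi_ne_zero]]


lemma phi_conv (B s : ℝ) :
    ∫ t, stdNormalPdf (s + B * t) * stdNormalPdf t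
      = stdNormalPdf (s / Real.sqrt (1 + B ^ 2)) / Real.sqrt (1 + B ^ 2) := by
  set K : ℝ := 1 + B ^ 2 with hK
  have hK0 : (0:ℝ) < K := by positivity
  have h2π : (0:ℝ) < 2 * π := by positivity
  have h1 : ∀ t, stdNormalPdf (s + B * t) * stdNormalPdf t
      = (Real.exp (-s ^ 2 / (2 * K)) / (2 * π)) * Real.exp (-(K / 2) * (t + s * B / K) ^ 2) := by
    intro t
    unfold stdNormalPdf
    rw [div_mul_div_comm, ← Real.exp_add, Real.mul_self_sqrt h2π.le, div_mul_eq_mul_div,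
      ← Real.exp_add]
    congr 2
    field_simp
    ring
  simp_rw [h1]
  rw [integral_const_mul]
  have h2 : ∫ t, Real.exp (-(K / 2) * (t + s * B / K) ^ 2)
      = Real.sqrt (2 * π) / Real.sqrt K := by
    rw [integral_add_right_eq_self (fun t => Real.exp (-(K / 2) * t ^ 2)) (s * B / K),
      integral_gaussian, show π / (K / 2) = 2 * π / K by field_simp,
      Real.sqrt_div h2π.le]
  rw [h2]
  have h3 : stdNormalPdf (s / Real.sqrt K) = Real.exp (-s ^ 2 / (2 * K)) / Real.sqrt (2 * π) := by
    unfold stdNormalPdf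
    rw [div_pow, Real.sq_sqrt hK0.le]
    congr 1
    field_simp
  rw [h3, div_mul_div_comm, div_div,
    show 2 * π * Real.sqrt K = Real.sqrt (2 * π) * (Real.sqrt (2 * π) * Real.sqrt K) by
      rw [← mul_assoc, Real.mul_self_sqrt h2π.le]]
  rw [mul_div_assoc, div_mul_cancel_left₀ (by positivity : Real.sqrt (2 * π) ≠ 0),
    ← div_eq_mul_inv]


lemma integral_gaussianReal_eq (μ : ℝ) {r : ℝ} (hr : 0 < r) (g : ℝ → ℝ) :
    ∫ x, g x ∂(gaussianReal μ r.toNNReal)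
      = ∫ x, gaussianPDFReal μ r.toNNReal x * g x := by
  have hv : r.toNNReal ≠ 0 := by
    simp only [ne_eq, Real.toNNReal_eq_zero, not_le]
    exact hr
  rw [gaussianReal_of_var_ne_zero _ hv]
  have h1 : (gaussianPDF μ r.toNNReal)
      = fun x => ((gaussianPDFReal μ r.toNNReal x).toNNReal : ℝ≥0∞) := rfl
  rw [h1, integral_withDensity_eq_integral_smul
    ((measurable_gaussianPDFReal _ _).real_toNNReal) g]
  congr 1
  funext x
  rw [NNReal.smul_def, Real.coe_toNNReal _ (gaussianPDFReal_nonneg _ _ _), smul_eq_mul]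

lemma gaussianPDFReal_eq_std (μ : ℝ) {r : ℝ} (hr : 0 < r) (x : ℝ) :
    gaussianPDFReal μ r.toNNReal x
      = stdNormalPdf ((x - μ) / Real.sqrt r) * (Real.sqrt r)⁻¹ := by
  have hsr : (0:ℝ) < Real.sqrt r := Real.sqrt_pos.mpr hr
  unfold gaussianPDFReal stdNormalPdf
  rw [Real.coe_toNNReal _ hr.le, div_pow, Real.sq_sqrt hr.le]
  rw [Real.sqrt_mul (by positivity) r]
  rw [show -(x - μ) ^ 2 / (2 * r) = -((x - μ) ^ 2 / r) / 2 by
    field_simp]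
  rw [mul_inv]
  ring

lemma gauss_substitute (μ : ℝ) {r : ℝ} (hr : 0 < r) (g : ℝ → ℝ) :
    ∫ x, gaussianPDFReal μ r.toNNReal x * g x
      = ∫ t, stdNormalPdf t * g (μ + Real.sqrt r * t) := by
  have hsr : (0:ℝ) < Real.sqrt r := Real.sqrt_pos.mpr hr
  simp_rw [gaussianPDFReal_eq_std μ hr]
  have h1 := integral_sub_right_eq_self (μ := volume)
    (fun u => stdNormalPdf (u / Real.sqrt r) * (Real.sqrt r)⁻¹ * g (u + μ)) μ
  simp only [sub_add_cancel] at h1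
  have hcomp := Measure.integral_comp_div
    (fun w => stdNormalPdf w * (Real.sqrt r)⁻¹ * g (Real.sqrt r * w + μ)) (Real.sqrt r)
  rw [h1]
  have h2 : (∫ (x : ℝ), stdNormalPdf (x / Real.sqrt r) * (Real.sqrt r)⁻¹ * g (x + μ))
      = ∫ (x : ℝ), stdNormalPdf (x / Real.sqrt r) * (Real.sqrt r)⁻¹
          * g (Real.sqrt r * (x / Real.sqrt r) + μ) :=
    integral_congr_ae (ae_of_all _ fun u => by
      simp only [mul_div_cancel₀ _ hsr.ne'])
  rw [h2, hcomp, abs_of_pos hsr, ← integral_smul]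
  refine integral_congr_ae (ae_of_all _ fun w => ?_)
  simp only [smul_eq_mul]
  rw [show μ + Real.sqrt r * w = Real.sqrt r * w + μ by ring]
  field_simp


lemma integrable_G (B : ℝ) :
    Integrable (fun p : ℝ × ℝ => stdNormalPdf (p.2 + B * p.1) * stdNormalPdf p.1)
      (volume.prod volume) := by
  have hc : Continuous fun p : ℝ × ℝ => stdNormalPdf (p.2 + B * p.1) * stdNormalPdf p.1 := by
    exact (continuous_stdNormalPdf.comp (by fun_prop)).mul
      (continuous_stdNormalPdf.comp continuous_fst)
  rw [integrable_prod_iff hc.aestronglyMeasurable]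
  constructor
  · exact ae_of_all _ fun t => by
      simpa using (integrable_stdNormalPdf.comp_add_right (B * t)).mul_const (stdNormalPdf t)
  · have h : (fun t : ℝ => ∫ s, ‖stdNormalPdf (s + B * t) * stdNormalPdf t‖)
        = fun t => stdNormalPdf t := by
      funext t
      have h2 : ∀ s, ‖stdNormalPdf (s + B * t) * stdNormalPdf t‖
          = stdNormalPdf (s + B * t) * stdNormalPdf t := fun s => by
        rw [Real.norm_of_nonneg (mul_nonneg (stdNormalPdf_nonneg _) (stdNormalPdf_nonneg _))]
      simp_rw [h2]
      rw [integral_mul_const, integral_add_right_eq_self stdNormalPdf (B * t),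
        integral_stdNormalPdf, one_mul]
    rw [h]
    exact integrable_stdNormalPdf

lemma key_integral (A B : ℝ) :
    ∫ t, stdNormalCdf (A + B * t) * stdNormalPdf t
      = stdNormalCdf (A / Real.sqrt (1 + B ^ 2)) := by
  set K : ℝ := 1 + B ^ 2 with hK
  have hK0 : (0:ℝ) < K := by positivity
  have hsK : (0:ℝ) < Real.sqrt K := Real.sqrt_pos.mpr hK0
  have ha : ∀ t, stdNormalCdf (A + B * t)
      = ∫ s, if s ≤ A then stdNormalPdf (s + B * t) else 0 := by
    intro t
    rw [stdNormalCdf, ← integral_indicator measurableSet_Iic,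
      ← integral_add_right_eq_self (fun u => (Set.Iic (A + B * t)).indicator stdNormalPdf u)
        (B * t)]
    congr 1
    funext s
    simp [Set.indicator_apply, Set.mem_Iic]
  simp_rw [ha, ← integral_mul_const]
  have hint : Integrable (Function.uncurry fun t s =>
      (if s ≤ A then stdNormalPdf (s + B * t) else 0) * stdNormalPdf t)
      (volume.prod volume) := by
    refine (integrable_G B).mono ?_ (ae_of_all _ fun p => ?_)
    · have heq : (Function.uncurry fun t s =>
          (if s ≤ A then stdNormalPdf (s + B * t) else 0) * stdNormalPdf t)
          = {p : ℝ × ℝ | p.2 ≤ A}.indicator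
            (fun p => stdNormalPdf (p.2 + B * p.1) * stdNormalPdf p.1) := by
        funext p
        simp only [Function.uncurry, Set.indicator_apply, Set.mem_setOf_eq]
        split_ifs <;> simp
      rw [heq]
      refine (Measurable.indicator ?_ ?_).aestronglyMeasurable
      · exact ((continuous_stdNormalPdf.comp (by fun_prop)).mul
          (continuous_stdNormalPdf.comp continuous_fst)).measurable
      · exact measurableSet_le measurable_snd measurable_const
    · simp only [Function.uncurry]
      split_ifs with h
      · exact le_refl _
      · rw [zero_mul, norm_zero]; exact norm_nonneg _
  rw [integral_integral_swap hint]
  have hb : ∀ s, (∫ t, (if s ≤ A then stdNormalPdf (s + B * t) else 0) * stdNormalPdf t)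
      = if s ≤ A then stdNormalPdf (s / Real.sqrt K) / Real.sqrt K else 0 := by
    intro s
    split_ifs with h
    · exact phi_conv B s
    · simp
  simp_rw [hb]
  have hc : ∀ s, (if s ≤ A then stdNormalPdf (s / Real.sqrt K) / Real.sqrt K else 0)
      = (fun w => if w ≤ A / Real.sqrt K then stdNormalPdf w else 0) (s / Real.sqrt K)
        * (Real.sqrt K)⁻¹ := by
    intro s
    have hiff : s / Real.sqrt K ≤ A / Real.sqrt K ↔ s ≤ A := div_le_div_iff_of_pos_right hsK
    simp only []
    rw [if_congr hiff rfl rfl]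
    split_ifs with h
    · rw [div_eq_mul_inv]
    · rw [zero_mul]
  simp_rw [hc]
  rw [integral_mul_const]
  have hcomp := Measure.integral_comp_div
    (fun w => if w ≤ A / Real.sqrt K then stdNormalPdf w else 0) (Real.sqrt K)
  rw [hcomp, abs_of_pos hsK, smul_eq_mul, mul_comm, ← mul_assoc, inv_mul_cancel₀ hsK.ne',
    one_mul]
  rw [stdNormalCdf, ← integral_indicator measurableSet_Iic]
  exact integral_congr_ae (ae_of_all _ fun w => by simp [Set.indicator_apply, Set.mem_Iic])


lemma gauss_cdf (μ : ℝ) {r : ℝ} (hr : 0 < r) (d : ℝ) :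
    ∫ x, gaussianPDFReal μ r.toNNReal x * (if x < d then (1:ℝ) else 0)
      = stdNormalCdf ((d - μ) / Real.sqrt r) := by
  have hsr : (0:ℝ) < Real.sqrt r := Real.sqrt_pos.mpr hr
  rw [gauss_substitute μ hr]
  have h : ∀ t, stdNormalPdf t * (if μ + Real.sqrt r * t < d then (1:ℝ) else 0)
      = if t < (d - μ) / Real.sqrt r then stdNormalPdf t else 0 := by
    intro t
    have hiff : μ + Real.sqrt r * t < d ↔ t < (d - μ) / Real.sqrt r := by
      rw [lt_div_iff₀ hsr, mul_comm]
      constructor <;> intro <;> linarith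
    rw [if_congr hiff rfl rfl, mul_ite, mul_one, mul_zero]
  simp_rw [h]
  calc ∫ t, (if t < (d - μ) / Real.sqrt r then stdNormalPdf t else 0)
      = ∫ t, (Set.Iio ((d - μ) / Real.sqrt r)).indicator stdNormalPdf t := by
        refine integral_congr_ae (ae_of_all _ fun t => ?_)
        simp [Set.indicator_apply]
    _ = ∫ t in Set.Iio ((d - μ) / Real.sqrt r), stdNormalPdf t :=
        integral_indicator measurableSet_Iio
    _ = ∫ t in Set.Iic ((d - μ) / Real.sqrt r), stdNormalPdf t :=
        setIntegral_congr_set Iio_ae_eq_Iic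
    _ = stdNormalCdf ((d - μ) / Real.sqrt r) := rfl

theorem prob_linear_score_comparison (m₁ m₂ a₁ a₂ s₁ s₂ n₁ n₂ b₁ b₂ : ℝ)
    (hs₁ : 0 < s₁) (hs₂ : 0 < s₂) (hn₁ : 0 < n₁) (hn₂ : 0 < n₂)
    (hb₁ : 0 < b₁) (hb₂ : 0 < b₂) :
    (∫ y₁, (∫ y₂, (if a₁ + b₁ * y₁ > a₂ + b₂ * y₂ then (1 : ℝ) else 0)
          ∂(gaussianReal m₂ ((s₂ ^ 2 / n₂).toNNReal)))
        ∂(gaussianReal m₁ ((s₁ ^ 2 / n₁).toNNReal))) =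
      stdNormalCdf ((a₁ - a₂ + b₁ * m₁ - b₂ * m₂) /
        Real.sqrt (b₁ ^ 2 * s₁ ^ 2 / n₁ + b₂ ^ 2 * s₂ ^ 2 / n₂)) := by
  have hr₁ : (0:ℝ) < s₁ ^ 2 / n₁ := by positivity
  have hr₂ : (0:ℝ) < s₂ ^ 2 / n₂ := by positivity
  set σ₁ : ℝ := Real.sqrt (s₁ ^ 2 / n₁) with hσ₁def
  set σ₂ : ℝ := Real.sqrt (s₂ ^ 2 / n₂) with hσ₂def
  have hσ₁ : (0:ℝ) < σ₁ := Real.sqrt_pos.mpr hr₁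
  have hσ₂ : (0:ℝ) < σ₂ := Real.sqrt_pos.mpr hr₂
  have hinner : ∀ y₁, (∫ y₂, (if a₁ + b₁ * y₁ > a₂ + b₂ * y₂ then (1 : ℝ) else 0)
        ∂(gaussianReal m₂ ((s₂ ^ 2 / n₂).toNNReal)))
      = stdNormalCdf (((a₁ + b₁ * y₁ - a₂) / b₂ - m₂) / σ₂) := by
    intro y₁
    rw [integral_gaussianReal_eq m₂ hr₂]
    have hite : ∀ y₂ : ℝ, (if a₁ + b₁ * y₁ > a₂ + b₂ * y₂ then (1:ℝ) else 0)
        = if y₂ < (a₁ + b₁ * y₁ - a₂) / b₂ then (1:ℝ) else 0 := by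
      intro y₂
      have hiff : a₁ + b₁ * y₁ > a₂ + b₂ * y₂ ↔ y₂ < (a₁ + b₁ * y₁ - a₂) / b₂ := by
        rw [gt_iff_lt, lt_div_iff₀ hb₂, mul_comm]
        constructor <;> intro <;> linarith
      rw [if_congr hiff rfl rfl]
    simp_rw [hite]
    exact gauss_cdf m₂ hr₂ _
  simp_rw [hinner]
  rw [integral_gaussianReal_eq m₁ hr₁, gauss_substitute m₁ hr₁]
  set A : ℝ := (a₁ - a₂ + b₁ * m₁ - b₂ * m₂) / (b₂ * σ₂) with hAdef
  set B : ℝ := b₁ * σ₁ / (b₂ * σ₂) with hBdef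
  have harg : ∀ t : ℝ, ((a₁ + b₁ * (m₁ + σ₁ * t) - a₂) / b₂ - m₂) / σ₂ = A + B * t := by
    intro t
    rw [hAdef, hBdef]
    field_simp
    ring
  rw [← hσ₁def]
  simp_rw [harg]
  have hcomm : (∫ t, stdNormalPdf t * stdNormalCdf (A + B * t))
      = ∫ t, stdNormalCdf (A + B * t) * stdNormalPdf t :=
    integral_congr_ae (ae_of_all _ fun t => mul_comm _ _)
  rw [hcomm, key_integral A B]
  congr 1
  have e₁ : σ₁ ^ 2 = s₁ ^ 2 / n₁ := Real.sq_sqrt hr₁.le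
  have e₂ : σ₂ ^ 2 = s₂ ^ 2 / n₂ := Real.sq_sqrt hr₂.le
  have h2 : (b₂ * σ₂) ^ 2 * (1 + B ^ 2) = b₁ ^ 2 * s₁ ^ 2 / n₁ + b₂ ^ 2 * s₂ ^ 2 / n₂ := by
    rw [hBdef, div_pow, mul_add, mul_one, mul_div_cancel₀ _ (by positivity : ((b₂ * σ₂) ^ 2) ≠ 0)]
    rw [mul_pow, mul_pow, e₁, e₂]
    ring
  have h3 : b₂ * σ₂ * Real.sqrt (1 + B ^ 2)
      = Real.sqrt (b₁ ^ 2 * s₁ ^ 2 / n₁ + b₂ ^ 2 * s₂ ^ 2 / n₂) := by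
    rw [← h2, Real.sqrt_mul (by positivity), Real.sqrt_sq (by positivity)]
  rw [hAdef, div_div, h3]
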